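/- Let J be a real n×n matrix, let λ ≥ 0 be the smallest eigenvalue of JᵀJ (so that aᵀ JᵀJ a ≥ λ‖a‖² for all a ∈ ℝⁿ), and let v be a unit vector with JᵀJ v = λ v. Then the (n+1)×(n+1) block matrix M = [[JᵀJ, JᵀJ v], [vᵀ JᵀJ, λ]] is symmetric positive semi-definite, i.e., M is symmetric and (aᵀ, b) M (a, b)ᵀ ≥ 0 for all (a, b) ∈ ℝⁿ × ℝ. -/

import Mathlib

open Matrix

/-- The inflated coefficient matrix `M = [[JᵀJ, JᵀJ v], [vᵀJᵀJ, λ]]` of the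
paper's inflation process is symmetric positive semi-definite, where `λ ≥ 0` is
the smallest eigenvalue of `JᵀJ` and `v` a corresponding unit eigenvector. -/
theorem inflated_matrix_posSemidef (n : ℕ)
    (J : Matrix (Fin n) (Fin n) ℝ) (lam : ℝ) (hlam : 0 ≤ lam)
    (hmin : ∀ a : Fin n → ℝ, lam * (a ⬝ᵥ a) ≤ a ⬝ᵥ (Jᵀ * J).mulVec a)
    (v : Fin n → ℝ) (hv : v ⬝ᵥ v = 1)
    (hev : (Jᵀ * J).mulVec v = lam • v) :
    (Matrix.fromBlocks (Jᵀ * J) (Matrix.replicateCol (Fin 1) ((Jᵀ * J).mulVec v))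
        (Matrix.replicateRow (Fin 1) (Matrix.vecMul v (Jᵀ * J)))
        (lam • (1 : Matrix (Fin 1) (Fin 1) ℝ))).IsSymm ∧
      ∀ (a : Fin n → ℝ) (b : ℝ),
        0 ≤ (Sum.elim a (fun _ : Fin 1 => b)) ⬝ᵥ
            (Matrix.fromBlocks (Jᵀ * J) (Matrix.replicateCol (Fin 1) ((Jᵀ * J).mulVec v))
              (Matrix.replicateRow (Fin 1) (Matrix.vecMul v (Jᵀ * J)))
              (lam • (1 : Matrix (Fin 1) (Fin 1) ℝ))).mulVec
              (Sum.elim a (fun _ : Fin 1 => b)) := by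
  have hA : (Jᵀ * J).IsSymm := by
    simp [Matrix.IsSymm, Matrix.transpose_mul]
  have hvm : Matrix.vecMul v (Jᵀ * J) = (Jᵀ * J).mulVec v := by
    conv_rhs => rw [← hA.eq]
    rw [Matrix.mulVec_transpose]
  constructor
  · refine Matrix.IsSymm.fromBlocks hA ?_ (by simp [Matrix.IsSymm])
    rw [hvm, Matrix.transpose_replicateCol]
  · intro a b
    rw [Matrix.fromBlocks_mulVec, sumElim_dotProduct_sumElim]
    simp only [Sum.elim_comp_inl, Sum.elim_comp_inr]
    have hcol : (Matrix.replicateCol (Fin 1) ((Jᵀ * J).mulVec v)).mulVec (fun _ : Fin 1 => b)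
        = b • (Jᵀ * J).mulVec v := by
      ext i
      simp [Matrix.mulVec, dotProduct, Matrix.replicateCol, mul_comm]
    have hrow : (Matrix.replicateRow (Fin 1) (Matrix.vecMul v (Jᵀ * J))).mulVec a
        = fun _ : Fin 1 => (Matrix.vecMul v (Jᵀ * J)) ⬝ᵥ a := by
      ext i
      simp [Matrix.mulVec, Matrix.replicateRow]
    rw [hcol, hrow, hev, hvm, hev]
    have e1 : a ⬝ᵥ ((Jᵀ * J).mulVec a + b • lam • v)
        = a ⬝ᵥ (Jᵀ * J).mulVec a + lam * b * (a ⬝ᵥ v) := by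
      rw [dotProduct_add, dotProduct_smul, dotProduct_smul,
        smul_eq_mul, smul_eq_mul]
      ring
    have e2 : (fun _ : Fin 1 => b) ⬝ᵥ ((fun _ : Fin 1 => (lam • v) ⬝ᵥ a) +
          (lam • (1 : Matrix (Fin 1) (Fin 1) ℝ)).mulVec fun _ : Fin 1 => b)
        = lam * b * (v ⬝ᵥ a) + lam * b * b := by
      simp [dotProduct, Matrix.mulVec, Matrix.one_apply, Fin.sum_univ_one,
        smul_dotProduct, Finset.mul_sum]
      ring_nf
      rw [Finset.mul_sum]
      simp [mul_comm, mul_left_comm, mul_assoc]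
      ring
    rw [e1, e2]
    have hav : v ⬝ᵥ a = a ⬝ᵥ v := dotProduct_comm v a
    have key : lam * ((a + b • v) ⬝ᵥ (a + b • v)) =
        lam * (a ⬝ᵥ a) + 2 * (lam * b * (a ⬝ᵥ v)) + lam * b * b := by
      rw [add_dotProduct, dotProduct_add, dotProduct_add,
        smul_dotProduct, smul_dotProduct, dotProduct_smul,
        dotProduct_smul, hv, hav, smul_eq_mul, smul_eq_mul, smul_eq_mul]
      ring
    have h1 := hmin a
    have h2 : 0 ≤ lam * ((a + b • v) ⬝ᵥ (a + b • v)) :=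
      mul_nonneg hlam (Finset.sum_nonneg fun i _ => mul_self_nonneg _)
    rw [hav]
    nlinarith [h1, h2, key]
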